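/- arXiv:math/9805015 — 3 statements merged into one kernel-verified Lean document; each statement's English description precedes it below -/
import Mathlib

section
/- For every n ≥ 2 there is a bijection from {1,2,3} × PT(n) onto the disjoint union LT(n+1) ⊔ IT(n−1), where PT(n) is the set of pointed well-weighted binary trees with n leaves, LT(n+1) the set of leaf-pointed well-weighted binary trees with n+1 leaves, and IT(n−1) the set of interior-pointed well-weighted binary trees with n−1 leaves. -/
/-- A weighted binary plane tree: a leaf or a root with weight `r` and two subtrees. -/
inductive WTree : Type
  | leaf : WTree
  | node : ℕ → WTree → WTree → WTree

/-- Number of leaves. -/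
def WTree.leaves : WTree → ℕ
  | .leaf => 1
  | .node _ t₁ t₂ => t₁.leaves + t₂.leaves

/-- Well-weighted: each weight is 1 or 2, and weight 2 forbids a right son which is a leaf. -/
def WTree.wellWeighted : WTree → Prop
  | .leaf => True
  | .node r t₁ t₂ => (r = 1 ∨ r = 2) ∧ (t₂ = .leaf → r = 1) ∧ t₁.wellWeighted ∧ t₂.wellWeighted

/-- The number of well-weighted binary trees with `n` leaves. -/
noncomputable def wwS (n : ℕ) : ℕ :=
  Nat.card {t : WTree // t.wellWeighted ∧ t.leaves = n}

/-- Nodes of a weighted binary tree, as paths from the root. -/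
inductive WPath : WTree → Type
  | root (t : WTree) : WPath t
  | left {r : ℕ} {t₁ t₂ : WTree} : WPath t₁ → WPath (.node r t₁ t₂)
  | right {r : ℕ} {t₁ t₂ : WTree} : WPath t₂ → WPath (.node r t₁ t₂)

/-- The subtree rooted at a given node. -/
def WPath.target : {t : WTree} → WPath t → WTree
  | _, .root t => t
  | _, .left p => p.target
  | _, .right p => p.target

/-- Pointed well-weighted trees with `n` leaves. -/
def PTn (n : ℕ) : Type :=
  {x : Σ t : WTree, WPath t // x.1.wellWeighted ∧ x.1.leaves = n}

/-- Leaf-pointed well-weighted trees with `n` leaves. -/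
def LTn (n : ℕ) : Type :=
  {x : Σ t : WTree, WPath t // x.1.wellWeighted ∧ x.1.leaves = n ∧ x.2.target = .leaf}

/-- Interior-pointed well-weighted trees with `n` leaves. -/
def ITn (n : ℕ) : Type :=
  {x : Σ t : WTree, WPath t // x.1.wellWeighted ∧ x.1.leaves = n ∧ x.2.target ≠ .leaf}

inductive Frame : Type
  | L (r : ℕ) (sib : WTree)
  | R (r : ℕ) (sib : WTree)

/-- plug, innermost frame first -/
def plugF : List Frame → WTree → WTree
  | [], s => s
  | .L r sib :: c, s => plugF c (.node r s sib)
  | .R r sib :: c, s => plugF c (.node r sib s)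

def CWW : List Frame → Prop
  | [] => True
  | .L r sib :: c => (r = 1 ∨ r = 2) ∧ (sib = .leaf → r = 1) ∧ sib.wellWeighted ∧ CWW c
  | .R r sib :: c => (r = 1 ∨ r = 2) ∧ sib.wellWeighted ∧ CWW c

def head1 : List Frame → Prop
  | .R r _ :: _ => r = 1
  | _ => True

def clv : List Frame → ℕ
  | [] => 0
  | .L _ sib :: c => sib.leaves + clv c
  | .R _ sib :: c => sib.leaves + clv c

theorem ww_plugF (c : List Frame) (s : WTree) :
    (plugF c s).wellWeighted ↔ CWW c ∧ s.wellWeighted ∧ (s = .leaf → head1 c) := by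
  induction c generalizing s with
  | nil => simp [plugF, CWW, head1]
  | cons f c ih =>
    cases f with
    | L r sib =>
      simp only [plugF, ih, CWW, head1, WTree.wellWeighted]
      simp
      tauto
    | R r sib =>
      simp only [plugF, ih, CWW, head1, WTree.wellWeighted]
      simp
      tauto

theorem leaves_plugF (c : List Frame) (s : WTree) :
    (plugF c s).leaves = s.leaves + clv c := by
  induction c generalizing s with
  | nil => simp [plugF, clv]
  | cons f c ih =>
    cases f with
    | L r sib => simp [plugF, clv, ih, WTree.leaves]; omega
    | R r sib => simp [plugF, clv, ih, WTree.leaves]; omega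

theorem leaves_pos (t : WTree) : 1 ≤ t.leaves := by
  induction t with
  | leaf => simp [WTree.leaves]
  | node r a b iha ihb => simp [WTree.leaves]; omega

def toCtx : {t : WTree} → WPath t → List Frame × WTree
  | t, .root _ => ([], t)
  | _, .left (r := r) (t₂ := t₂) p => ((toCtx p).1 ++ [.L r t₂], (toCtx p).2)
  | _, .right (r := r) (t₁ := t₁) p => ((toCtx p).1 ++ [.R r t₁], (toCtx p).2)

/-- plug, outermost frame first -/
def fromT : List Frame → WTree → WTree
  | [], s => s
  | .L r sib :: c, s => .node r (fromT c s) sib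
  | .R r sib :: c, s => .node r sib (fromT c s)

def fromP : (c : List Frame) → (s : WTree) → WPath (fromT c s)
  | [], s => .root s
  | .L _ _ :: c, s => .left (fromP c s)
  | .R _ _ :: c, s => .right (fromP c s)

theorem plugF_append (a b : List Frame) (s : WTree) :
    plugF (a ++ b) s = plugF b (plugF a s) := by
  induction a generalizing s with
  | nil => rfl
  | cons f a ih => cases f <;> simp [plugF, ih]

theorem fromT_eq (c : List Frame) (s : WTree) : fromT c s = plugF c.reverse s := by
  induction c with
  | nil => rfl
  | cons f c ih => cases f <;> simp [fromT, ih, plugF_append, plugF]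

theorem target_fromP (c : List Frame) (s : WTree) : (fromP c s).target = s := by
  induction c with
  | nil => rfl
  | cons f c ih => cases f <;> simp [fromP, WPath.target, ih]

theorem toZ_fromP (c : List Frame) (s : WTree) : toCtx (fromP c s) = (c.reverse, s) := by
  induction c with
  | nil => rfl
  | cons f c ih => cases f <;> simp [fromP, toCtx, ih]

theorem plugF_toZ {t : WTree} (p : WPath t) : plugF (toCtx p).1 (toCtx p).2 = t := by
  induction p with
  | root t => rfl
  | left p ih => simp [toCtx, plugF_append, plugF, ih]
  | right p ih => simp [toCtx, plugF_append, plugF, ih]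

theorem snd_toZ {t : WTree} (p : WPath t) : (toCtx p).2 = p.target := by
  induction p with
  | root t => rfl
  | left p ih => simpa [toCtx, WPath.target] using ih
  | right p ih => simpa [toCtx, WPath.target] using ih

theorem fromZ_toZ {t : WTree} (p : WPath t) :
    (⟨fromT (toCtx p).1.reverse (toCtx p).2, fromP (toCtx p).1.reverse (toCtx p).2⟩ : Σ t, WPath t)
      = ⟨t, p⟩ := by
  induction p with
  | root t => rfl
  | @left r t₁ t₂ p ih =>
    have hrev : ((toCtx p).1 ++ [Frame.L r t₂]).reverse
        = Frame.L r t₂ :: (toCtx p).1.reverse := by simp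
    show (⟨fromT ((toCtx p).1 ++ [Frame.L r t₂]).reverse (toCtx p).2,
        fromP ((toCtx p).1 ++ [Frame.L r t₂]).reverse (toCtx p).2⟩ : Σ t, WPath t) = _
    rw [hrev]
    show (⟨WTree.node r (fromT (toCtx p).1.reverse (toCtx p).2) t₂,
        WPath.left (fromP (toCtx p).1.reverse (toCtx p).2)⟩ : Σ t, WPath t) = _
    revert ih
    generalize toCtx p = z
    obtain ⟨c0, s0⟩ := z
    intro ih
    have h1 : fromT c0.reverse s0 = _ := congrArg Sigma.fst ih
    subst h1
    have h2 := eq_of_heq (Sigma.mk.inj_iff.mp ih).2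
    subst h2
    rfl
  | @right r t₁ t₂ p ih =>
    have hrev : ((toCtx p).1 ++ [Frame.R r t₁]).reverse
        = Frame.R r t₁ :: (toCtx p).1.reverse := by simp
    show (⟨fromT ((toCtx p).1 ++ [Frame.R r t₁]).reverse (toCtx p).2,
        fromP ((toCtx p).1 ++ [Frame.R r t₁]).reverse (toCtx p).2⟩ : Σ t, WPath t) = _
    rw [hrev]
    show (⟨WTree.node r t₁ (fromT (toCtx p).1.reverse (toCtx p).2),
        WPath.right (fromP (toCtx p).1.reverse (toCtx p).2)⟩ : Σ t, WPath t) = _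
    revert ih
    generalize toCtx p = z
    obtain ⟨c0, s0⟩ := z
    intro ih
    have h1 : fromT c0.reverse s0 = _ := congrArg Sigma.fst ih
    subst h1
    have h2 := eq_of_heq (Sigma.mk.inj_iff.mp ih).2
    subst h2
    rfl

def zipEquiv : (Σ t : WTree, WPath t) ≃ (List Frame × WTree) where
  toFun x := toCtx x.2
  invFun z := ⟨fromT z.1.reverse z.2, fromP z.1.reverse z.2⟩
  left_inv x := by obtain ⟨t, p⟩ := x; exact fromZ_toZ p
  right_inv z := by obtain ⟨c, s⟩ := z; simp [toZ_fromP]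

def Pd (n : ℕ) (z : List Frame × WTree) : Prop :=
  CWW z.1 ∧ z.2.wellWeighted ∧ (z.2 = .leaf → head1 z.1) ∧ z.2.leaves + clv z.1 = n

def Pl (n : ℕ) (z : List Frame × WTree) : Prop := Pd n z ∧ z.2 = .leaf

def PiZ (n : ℕ) (z : List Frame × WTree) : Prop := Pd n z ∧ z.2 ≠ .leaf

theorem pd_iff (n : ℕ) (z : List Frame × WTree) :
    Pd n z ↔ (plugF z.1 z.2).wellWeighted ∧ (plugF z.1 z.2).leaves = n := by
  rw [ww_plugF, leaves_plugF, Pd]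
  tauto

def ePT (n : ℕ) : PTn n ≃ {z : List Frame × WTree // Pd n z} :=
  Equiv.subtypeEquiv zipEquiv (fun x => by
    rw [pd_iff]
    show x.1.wellWeighted ∧ x.1.leaves = n ↔ _
    rw [show (zipEquiv x) = toCtx x.2 from rfl, plugF_toZ x.2])

def eLT (n : ℕ) : LTn n ≃ {z : List Frame × WTree // Pl n z} :=
  Equiv.subtypeEquiv zipEquiv (fun x => by
    simp only [Pl, pd_iff]
    show x.1.wellWeighted ∧ x.1.leaves = n ∧ x.2.target = .leaf ↔ _
    rw [show (zipEquiv x) = toCtx x.2 from rfl, plugF_toZ x.2, snd_toZ x.2]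
    tauto)

def eIT (n : ℕ) : ITn n ≃ {z : List Frame × WTree // PiZ n z} :=
  Equiv.subtypeEquiv zipEquiv (fun x => by
    simp only [PiZ, pd_iff]
    show x.1.wellWeighted ∧ x.1.leaves = n ∧ x.2.target ≠ .leaf ↔ _
    rw [show (zipEquiv x) = toCtx x.2 from rfl, plugF_toZ x.2, snd_toZ x.2]
    tauto)

open Frame in
def Fraw (i : Fin 3) (z : List Frame × WTree) :
    (List Frame × WTree) ⊕ (List Frame × WTree) :=
  if i = 0 then .inl (.R 1 z.2 :: z.1, .leaf)
  else if i = 1 then .inl (.L 1 z.2 :: z.1, .leaf)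
  else
    match z.2, z.1 with
    | .node r a b, c => .inl (.L 2 (.node r a b) :: c, .leaf)
    | .leaf, .R _ a :: c' => .inl (.L 1 .leaf :: .R 2 a :: c', .leaf)
    | .leaf, .L r b :: c' =>
        if r = 2 then .inr (c', b) else .inl (.R 1 .leaf :: .R 2 b :: c', .leaf)
    | .leaf, [] => .inl ([], .leaf)

def Graw : (List Frame × WTree) ⊕ (List Frame × WTree) → Fin 3 × (List Frame × WTree)
  | .inr (c, s) => (2, (.L 2 s :: c, .leaf))
  | .inl (c, _) =>
    match c with
    | [] => (0, ([], .leaf))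
    | .L r t :: c' =>
        if r = 2 then (2, (c', t))
        else
          match t, c' with
          | .leaf, .R r₂ a :: c'' =>
              if r₂ = 2 then (2, (.R 1 a :: c'', .leaf)) else (1, (.R r₂ a :: c'', .leaf))
          | t, c' => (1, (c', t))
    | .R _ t :: c' =>
        match t, c' with
        | .leaf, .R r₂ a :: c'' =>
            if r₂ = 2 then (2, (.L 1 a :: c'', .leaf)) else (0, (.R r₂ a :: c'', .leaf))
        | t, c' => (0, (c', t))

def PSm (n : ℕ) : (List Frame × WTree) ⊕ (List Frame × WTree) → Prop
  | .inl w => Pl (n + 1) w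
  | .inr w => PiZ (n - 1) w

theorem hF {n : ℕ} (hn : 2 ≤ n) (i : Fin 3) (z : List Frame × WTree) (hz : Pd n z) :
    PSm n (Fraw i z) := by
  obtain ⟨c, s⟩ := z
  obtain ⟨h1, h2, h3, h4⟩ := hz
  fin_cases i
  · show PSm n (.inl (.R 1 s :: c, .leaf))
    refine ⟨⟨⟨Or.inl rfl, h2, h1⟩, True.intro, fun _ => rfl, ?_⟩, rfl⟩
    simp only [WTree.leaves, clv] at h4 ⊢; omega
  · show PSm n (.inl (.L 1 s :: c, .leaf))
    refine ⟨⟨⟨Or.inl rfl, fun _ => rfl, h2, h1⟩, True.intro, fun _ => True.intro, ?_⟩, rfl⟩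
    simp only [WTree.leaves, clv] at h4 ⊢; omega
  · cases s with
    | node r a b =>
      show PSm n (.inl (.L 2 (.node r a b) :: c, .leaf))
      refine ⟨⟨⟨Or.inr rfl, fun h => WTree.noConfusion h, h2, h1⟩, True.intro, fun _ => True.intro, ?_⟩, rfl⟩
      simp only [WTree.leaves, clv] at h4 ⊢; omega
    | leaf =>
      cases c with
      | nil =>
        exfalso; simp only [WTree.leaves, clv] at h4; omega
      | cons f c' =>
        cases f with
        | L r b =>
          obtain ⟨hr, hbl, hwb, hc'⟩ := h1
          show PSm n (if r = 2 then Sum.inr (c', b) else .inl (.R 1 .leaf :: .R 2 b :: c', .leaf))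
          by_cases hr2 : r = 2
          · rw [if_pos hr2]
            have hbne : b ≠ .leaf := fun hb => by
              have := hbl hb; omega
            refine ⟨⟨hc', hwb, fun hb => absurd hb hbne, ?_⟩, hbne⟩
            simp only [WTree.leaves, clv] at h4 ⊢; omega
          · rw [if_neg hr2]
            refine ⟨⟨⟨Or.inl rfl, True.intro, Or.inr rfl, hwb, hc'⟩, True.intro, fun _ => rfl, ?_⟩, rfl⟩
            simp only [WTree.leaves, clv] at h4 ⊢; omega
        | R r a =>
          obtain ⟨hr, hwa, hc'⟩ := h1
          show PSm n (.inl (.L 1 .leaf :: .R 2 a :: c', .leaf))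
          refine ⟨⟨⟨Or.inl rfl, fun _ => rfl, True.intro, Or.inr rfl, hwa, hc'⟩, True.intro,
            fun _ => True.intro, ?_⟩, rfl⟩
          simp only [WTree.leaves, clv] at h4 ⊢; omega

theorem hGF {n : ℕ} (hn : 2 ≤ n) (i : Fin 3) (z : List Frame × WTree) (hz : Pd n z) :
    Graw (Fraw i z) = (i, z) := by
  obtain ⟨c, s⟩ := z
  obtain ⟨h1, h2, h3, h4⟩ := hz
  fin_cases i
  · cases s with
    | node r a b => rfl
    | leaf =>
      cases c with
      | nil => rfl
      | cons f c' =>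
        cases f with
        | L r b => rfl
        | R r a =>
          have hr1 : r = 1 := h3 rfl
          subst hr1; rfl
  · cases s with
    | node r a b => rfl
    | leaf =>
      cases c with
      | nil => rfl
      | cons f c' =>
        cases f with
        | L r b => rfl
        | R r a =>
          have hr1 : r = 1 := h3 rfl
          subst hr1; rfl
  · cases s with
    | node r a b => rfl
    | leaf =>
      cases c with
      | nil =>
        exfalso; simp only [WTree.leaves, clv] at h4; omega
      | cons f c' =>
        cases f with
        | L r b =>
          obtain ⟨hr, hbl, hwb, hc'⟩ := h1
          by_cases hr2 : r = 2
          · subst hr2; rfl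
          · have hr1 : r = 1 := hr.resolve_right hr2
            subst hr1; rfl
        | R r a =>
          have hr1 : r = 1 := h3 rfl
          subst hr1; rfl

theorem hGFG {n : ℕ} (hn : 2 ≤ n) (y : (List Frame × WTree) ⊕ (List Frame × WTree))
    (hy : PSm n y) : Pd n (Graw y).2 ∧ Fraw (Graw y).1 (Graw y).2 = y := by
  rcases y with ⟨c, s⟩ | ⟨c, s⟩
  · obtain ⟨⟨h1, h2, h3, h4⟩, hsl⟩ := hy
    simp only at hsl
    subst hsl
    cases c with
    | nil => exfalso; simp only [WTree.leaves, clv] at h4; omega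
    | cons f c' =>
      cases f with
      | L r t =>
        obtain ⟨hr, htl, hwt, hc'⟩ := h1
        by_cases hr2 : r = 2
        · subst hr2
          have htne : t ≠ .leaf := fun ht => by have := htl ht; omega
          cases t with
          | leaf => exact absurd rfl htne
          | node r' a b =>
            refine ⟨⟨hc', hwt, fun h => WTree.noConfusion h, ?_⟩, rfl⟩
            simp [Graw, WTree.leaves, clv] at h4 ⊢; omega
        · have hr1 : r = 1 := hr.resolve_right hr2
          subst hr1
          cases t with
          | node r' a b =>
            refine ⟨⟨hc', hwt, fun h => WTree.noConfusion h, ?_⟩, rfl⟩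
            simp [Graw, WTree.leaves, clv] at h4 ⊢; omega
          | leaf =>
            cases c' with
            | nil => exfalso; simp only [WTree.leaves, clv] at h4; omega
            | cons f₂ c'' =>
              cases f₂ with
              | L r₂ b₂ =>
                refine ⟨⟨hc', True.intro, fun _ => True.intro, ?_⟩, rfl⟩
                simp [Graw, WTree.leaves, clv] at h4 ⊢; omega
              | R r₂ a₂ =>
                obtain ⟨hr₂, hwa₂, hc''⟩ := hc'
                by_cases hr22 : r₂ = 2
                · subst hr22
                  refine ⟨⟨⟨Or.inl rfl, hwa₂, hc''⟩, True.intro, fun _ => rfl, ?_⟩, rfl⟩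
                  simp [Graw, WTree.leaves, clv] at h4 ⊢; omega
                · have hr21 : r₂ = 1 := hr₂.resolve_right hr22
                  subst hr21
                  refine ⟨⟨⟨Or.inl rfl, hwa₂, hc''⟩, True.intro, fun _ => rfl, ?_⟩, rfl⟩
                  simp [Graw, WTree.leaves, clv] at h4 ⊢; omega
      | R r t =>
        obtain ⟨hr, hwt, hc'⟩ := h1
        have hr1 : r = 1 := h3 rfl
        subst hr1
        cases t with
        | node r' a b =>
          refine ⟨⟨hc', hwt, fun h => WTree.noConfusion h, ?_⟩, rfl⟩
          simp [Graw, WTree.leaves, clv] at h4 ⊢; omega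
        | leaf =>
          cases c' with
          | nil => exfalso; simp only [WTree.leaves, clv] at h4; omega
          | cons f₂ c'' =>
            cases f₂ with
            | L r₂ b₂ =>
              refine ⟨⟨hc', True.intro, fun _ => True.intro, ?_⟩, rfl⟩
              simp [Graw, WTree.leaves, clv] at h4 ⊢; omega
            | R r₂ a₂ =>
              obtain ⟨hr₂, hwa₂, hc''⟩ := hc'
              by_cases hr22 : r₂ = 2
              · subst hr22
                refine ⟨⟨⟨Or.inl rfl, fun _ => rfl, hwa₂, hc''⟩, True.intro,
                  fun _ => True.intro, ?_⟩, rfl⟩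
                simp [Graw, WTree.leaves, clv] at h4 ⊢; omega
              · have hr21 : r₂ = 1 := hr₂.resolve_right hr22
                subst hr21
                refine ⟨⟨⟨Or.inl rfl, hwa₂, hc''⟩, True.intro, fun _ => rfl, ?_⟩, rfl⟩
                simp [Graw, WTree.leaves, clv] at h4 ⊢; omega
  · obtain ⟨⟨h1, h2, h3, h4⟩, hne⟩ := hy
    simp only at hne
    refine ⟨⟨⟨Or.inr rfl, fun hs => absurd hs hne, h2, h1⟩, True.intro,
      fun _ => True.intro, ?_⟩, ?_⟩
    · simp [Graw, WTree.leaves, clv] at h4 ⊢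
      have := leaves_pos s
      omega
    · cases s with
      | leaf => exact absurd rfl hne
      | node r' a b => rfl

def liftSum (n : ℕ) : (Y : (List Frame × WTree) ⊕ (List Frame × WTree)) → PSm n Y →
    ({z : List Frame × WTree // Pl (n + 1) z} ⊕ {z : List Frame × WTree // PiZ (n - 1) z})
  | .inl w, hw => .inl ⟨w, hw⟩
  | .inr w, hw => .inr ⟨w, hw⟩

def unlift {n : ℕ} :
    ({z : List Frame × WTree // Pl (n + 1) z} ⊕ {z : List Frame × WTree // PiZ (n - 1) z}) →
      (List Frame × WTree) ⊕ (List Frame × WTree) :=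
  Sum.map Subtype.val Subtype.val

theorem unlift_psm {n : ℕ}
    (y : {z : List Frame × WTree // Pl (n + 1) z} ⊕ {z : List Frame × WTree // PiZ (n - 1) z}) :
    PSm n (unlift y) := by
  rcases y with ⟨w, hw⟩ | ⟨w, hw⟩
  · exact hw
  · exact hw

theorem unlift_lift {n : ℕ} (Y : (List Frame × WTree) ⊕ (List Frame × WTree)) (hY : PSm n Y) :
    unlift (liftSum n Y hY) = Y := by
  cases Y <;> rfl

theorem lift_unlift {n : ℕ}
    (y : {z : List Frame × WTree // Pl (n + 1) z} ⊕ {z : List Frame × WTree // PiZ (n - 1) z})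
    (Y : (List Frame × WTree) ⊕ (List Frame × WTree)) (hY : PSm n Y) (h : Y = unlift y) :
    liftSum n Y hY = y := by
  subst h
  rcases y with ⟨w, hw⟩ | ⟨w, hw⟩ <;> rfl

def mainE (n : ℕ) (hn : 2 ≤ n) :
    (Fin 3 × {z : List Frame × WTree // Pd n z}) ≃
      ({z : List Frame × WTree // Pl (n + 1) z} ⊕ {z : List Frame × WTree // PiZ (n - 1) z}) where
  toFun x := liftSum n (Fraw x.1 x.2.1) (hF hn x.1 x.2.1 x.2.2)
  invFun y := ((Graw (unlift y)).1, ⟨(Graw (unlift y)).2, (hGFG hn (unlift y) (unlift_psm y)).1⟩)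
  left_inv := by
    rintro ⟨i, z, hz⟩
    have hgf := hGF hn i z hz
    have h1 := unlift_lift (Fraw i z) (hF hn i z hz)
    refine Prod.ext ?_ ?_
    · show (Graw (unlift (liftSum n (Fraw i z) _))).1 = i
      rw [h1, hgf]
    · apply Subtype.ext
      show (Graw (unlift (liftSum n (Fraw i z) _))).2 = z
      rw [h1, hgf]
  right_inv := by
    intro y
    exact lift_unlift y _ _ ((hGFG hn (unlift y) (unlift_psm y)).2)


/-- For every `n ≥ 2` there is a bijection from `{1,2,3} × PT(n)` onto
`LT(n+1) ⊔ IT(n-1)`. -/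
theorem pointed_trees_bijection (n : ℕ) (hn : 2 ≤ n) :
    Nonempty ((Fin 3 × PTn n) ≃ (LTn (n + 1) ⊕ ITn (n - 1))) := by
  exact ⟨((Equiv.refl (Fin 3)).prodCongr (ePT n)).trans
    ((mainE n hn).trans (Equiv.sumCongr (eLT (n + 1)).symm (eIT (n - 1)).symm))⟩
end

section
/- The little Schröder numbers s(n), defined by s(1)=s(2)=1 and the recurrence 3(2n−1)s(n) = (n+1)s(n+1) + (n−2)s(n−1) for n ≥ 2, satisfy s(n+1) = 2·Σ_{k=1}^{n} s(k)·s(n+1−k) − s(n) for all n ≥ 1. -/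
private def Csum (s : ℕ → ℚ) (n : ℕ) : ℚ := ∑ k ∈ Finset.range n, s (k+1) * s (n - k)
private def Dsum (s : ℕ → ℚ) (n : ℕ) : ℚ := ∑ k ∈ Finset.range n, ((k:ℚ)+1) * (s (k+1) * s (n - k))

private lemma sym_lemma (s : ℕ → ℚ) (n : ℕ) : 2 * Dsum s n = ((n:ℚ)+1) * Csum s n := by
  have h : Dsum s n = ∑ k ∈ Finset.range n, ((n:ℚ) - k) * (s (k+1) * s (n - k)) := by
    unfold Dsum
    rw [← Finset.sum_range_reflect]
    apply Finset.sum_congr rfl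
    intro j hj
    rw [Finset.mem_range] at hj
    have h1 : n - 1 - j + 1 = n - j := by omega
    have h2 : n - (n - 1 - j) = j + 1 := by omega
    have h3 : ((n - 1 - j : ℕ) : ℚ) + 1 = (n:ℚ) - j := by
      have e : (n - 1 - j : ℕ) = n - (j+1) := by omega
      rw [e, Nat.cast_sub (by omega)]; push_cast; ring
    rw [h1, h2, h3, mul_comm (s (n-j)) (s (j+1))]
  have h2 : Dsum s n + Dsum s n = ((n:ℚ)+1) * Csum s n := by
    nth_rewrite 2 [h]
    unfold Dsum Csum
    rw [Finset.mul_sum, ← Finset.sum_add_distrib]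
    apply Finset.sum_congr rfl
    intro k hk
    ring
  linarith

private lemma keyA (s : ℕ → ℚ) (h1 : s 1 = 1) (h2 : s 2 = 1)
    (hrec : ∀ n : ℕ, 2 ≤ n →
      3 * (2 * (n : ℚ) - 1) * s n = ((n : ℚ) + 1) * s (n + 1) + ((n : ℚ) - 2) * s (n - 1))
    (m : ℕ) :
    ((m:ℚ)+4) * Csum s (m+3) + (m:ℚ) * Csum s (m+1)
      = 6*((m:ℚ)+2) * Csum s (m+2) + 2 * s (m+3) - 2 * s (m+2) := by
  set R := Finset.range (m+1) with hR
  -- pointwise recurrence summed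
  have E0 : ∑ j ∈ R, (6*(j:ℚ)+9) * (s (j+2) * s (m+1-j))
      = (∑ j ∈ R, ((j:ℚ)+3)*(s (j+3) * s (m+1-j)))
        + ∑ j ∈ R, (j:ℚ)*(s (j+1) * s (m+1-j)) := by
    rw [← Finset.sum_add_distrib]
    apply Finset.sum_congr rfl
    intro j hj
    have h := hrec (j+2) (by omega)
    have e1 : j + 2 - 1 = j + 1 := by omega
    rw [e1] at h
    push_cast at h
    linear_combination (s (m+1-j)) * h
  have hcomb : ∑ j ∈ R, (6*(j:ℚ)+9) * (s (j+2) * s (m+1-j))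
      = 6 * (∑ j ∈ R, ((j:ℚ)+2)*(s (j+2) * s (m+1-j)))
        - 3 * ∑ j ∈ R, s (j+2) * s (m+1-j) := by
    rw [Finset.mul_sum, Finset.mul_sum, ← Finset.sum_sub_distrib]
    apply Finset.sum_congr rfl
    intro j hj
    ring
  have hC2 : Csum s (m+2) = (∑ j ∈ R, s (j+2) * s (m+1-j)) + s (m+2) := by
    unfold Csum
    rw [Finset.sum_range_succ']
    have e : ∀ j : ℕ, m+2-(j+1) = m+1-j := fun j => by omega
    simp [e, h1]
    rfl
  have hD2 : Dsum s (m+2) = (∑ j ∈ R, ((j:ℚ)+2)*(s (j+2) * s (m+1-j))) + s (m+2) := by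
    unfold Dsum
    rw [Finset.sum_range_succ']
    have e : ∀ j : ℕ, m+2-(j+1) = m+1-j := fun j => by omega
    simp only [e, Nat.cast_zero, zero_add, Nat.sub_zero, h1, one_mul, Nat.cast_add,
      Nat.cast_one]
    rw [hR]
    congr 1
    apply Finset.sum_congr rfl
    intro j hj
    rw [show j+1+1 = j+2 from rfl]
    ring
  have hD3 : Dsum s (m+3) = (∑ j ∈ R, ((j:ℚ)+3)*(s (j+3) * s (m+1-j)))
      + 2 * s (m+2) + s (m+3) := by
    unfold Dsum
    rw [Finset.sum_range_succ', Finset.sum_range_succ']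
    have e : ∀ j : ℕ, m+3-(j+1+1) = m+1-j := fun j => by omega
    have e2 : m + 3 - 1 = m + 2 := by omega
    simp only [e, e2, Nat.cast_zero, zero_add, Nat.sub_zero, h1, h2, one_mul, Nat.cast_add,
      Nat.cast_one, Nat.cast_ofNat]
    rw [hR]
    congr 2
    · apply Finset.sum_congr rfl
      intro j hj
      rw [show j+1+1+1 = j+3 from rfl]
      ring
    · ring
  have hDC1 : Dsum s (m+1) - Csum s (m+1) = ∑ j ∈ R, (j:ℚ)*(s (j+1) * s (m+1-j)) := by
    unfold Dsum Csum
    rw [← Finset.sum_sub_distrib]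
    apply Finset.sum_congr rfl
    intro j hj
    ring
  have Ecore : 6 * Dsum s (m+2) - 3 * Csum s (m+2) - 3 * s (m+2)
      = Dsum s (m+3) - 2 * s (m+2) - s (m+3) + Dsum s (m+1) - Csum s (m+1) := by
    linarith [E0, hcomb, hC2, hD2, hD3, hDC1]
  have hs1 := sym_lemma s (m+1)
  have hs2 := sym_lemma s (m+2)
  have hs3 := sym_lemma s (m+3)
  push_cast at hs1 hs2 hs3
  linear_combination -2*Ecore - hs3 + 6*hs2 - hs1

/-- If `s(1) = s(2) = 1` and `3(2n-1) s(n) = (n+1) s(n+1) + (n-2) s(n-1)` for `n ≥ 2`,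
then `s(n+1) = 2 Σ_{k=1}^{n} s(k) s(n+1-k) - s(n)` for all `n ≥ 1`. -/
theorem three_term_implies_convolution (s : ℕ → ℚ)
    (h1 : s 1 = 1) (h2 : s 2 = 1)
    (hrec : ∀ n : ℕ, 2 ≤ n →
      3 * (2 * (n : ℚ) - 1) * s n = ((n : ℚ) + 1) * s (n + 1) + ((n : ℚ) - 2) * s (n - 1)) :
    ∀ n : ℕ, 1 ≤ n →
      s (n + 1) = 2 * ∑ k ∈ Finset.Icc 1 n, s k * s (n + 1 - k) - s n := by
  have key : ∀ m : ℕ, s (m+2) = 2 * Csum s (m+1) - s (m+1) := by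
    intro m
    induction m using Nat.strong_induction_on with
    | _ m ih =>
      match m with
      | 0 =>
        simp [Csum, h1, h2]
        norm_num
      | 1 =>
        have h3 : s 3 = 3 := by
          have h := hrec 2 (by omega)
          norm_num at h
          linarith
        have : Csum s 2 = 2 := by
          simp [Csum, Finset.sum_range_succ, h1, h2]
          norm_num
        rw [this, h2, h3]
        norm_num
      | (k+2) =>
        have I1 := ih k (by omega)
        have I2 := ih (k+1) (by omega)
        have kA := keyA s h1 h2 hrec k
        have R3 := hrec (k+3) (by omega)
        have R2 := hrec (k+2) (by omega)
        rw [show k+3-1 = k+2 from by omega] at R3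
        rw [show k+2-1 = k+1 from by omega] at R2
        push_cast at R3 R2
        have hne : ((k:ℚ)+4) ≠ 0 := by positivity
        have main : ((k:ℚ)+4) * s (k+4) = ((k:ℚ)+4) * (2 * Csum s (k+3) - s (k+3)) := by
          linear_combination -R3 - 2*kA + (6*(k:ℚ)+12)*I2 - (k:ℚ)*I1 - R2
        have := mul_left_cancel₀ hne main
        convert this using 2
  intro n hn
  obtain ⟨m, rfl⟩ : ∃ m, n = m + 1 := ⟨n - 1, by omega⟩
  have hIcc : ∑ k ∈ Finset.Icc 1 (m+1), s k * s (m+1+1-k)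
      = Csum s (m+1) := by
    unfold Csum
    rw [← Finset.Ico_add_one_right_eq_Icc, Finset.sum_Ico_eq_sum_range]
    apply Finset.sum_congr (by norm_num)
    intro j hj
    rw [Finset.mem_range] at hj
    rw [show 1 + j = j + 1 from by omega, show m+1+1-(j+1) = m+1-j from by omega]
  rw [hIcc]
  exact key m
end

section
/- For every n ≥ 1 there is a bijection between {1,2} × (pointed binary plane trees with n leaves) and leaf-pointed binary plane trees with n+1 leaves (Rémy's bijection). -/
/-- Binary plane trees: a single leaf, or an ordered pair of two binary plane trees. -/
inductive BTree : Type
  | leaf : BTree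
  | node : BTree → BTree → BTree

def BTree.leaves : BTree → ℕ
  | .leaf => 1
  | .node t₁ t₂ => t₁.leaves + t₂.leaves

def BTree.interior : BTree → ℕ
  | .leaf => 0
  | .node t₁ t₂ => 1 + t₁.interior + t₂.interior

def BTree.nodes : BTree → ℕ
  | .leaf => 1
  | .node t₁ t₂ => 1 + t₁.nodes + t₂.nodes

/-- Nodes of a binary plane tree, as paths from the root. -/
inductive BPath : BTree → Type
  | root (t : BTree) : BPath t
  | left {t₁ t₂ : BTree} : BPath t₁ → BPath (.node t₁ t₂)
  | right {t₁ t₂ : BTree} : BPath t₂ → BPath (.node t₁ t₂)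

def BPath.target : {t : BTree} → BPath t → BTree
  | _, .root t => t
  | _, .left p => p.target
  | _, .right p => p.target

/-- Rémy insertion: insert a new leaf to the left (b = true) or right (b = false)
of the distinguished node; the returned path points at the new leaf. -/
def ins (b : Bool) : {t : BTree} → BPath t → Σ t', BPath t'
  | _, .root t =>
      bif b then ⟨.node .leaf t, .left (.root .leaf)⟩
      else ⟨.node t .leaf, .right (.root .leaf)⟩
  | _, @BPath.left _ t₂ p => ⟨.node (ins b p).1 t₂, .left (ins b p).2⟩
  | _, @BPath.right t₁ _ p => ⟨.node t₁ (ins b p).1, .right (ins b p).2⟩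

/-- Rémy deletion (inverse of insertion on valid inputs). -/
def del : {t : BTree} → BPath t → Bool × Σ t', BPath t'
  | _, .root t => (true, ⟨t, .root t⟩)
  | _, @BPath.left .leaf t₂ (.root _) => (true, ⟨t₂, .root t₂⟩)
  | _, @BPath.right t₁ .leaf (.root _) => (false, ⟨t₁, .root t₁⟩)
  | _, @BPath.left (.node a c) t₂ p =>
      ((del p).1, ⟨.node (del p).2.1 t₂, .left (del p).2.2⟩)
  | _, @BPath.right t₁ (.node a c) p =>
      ((del p).1, ⟨.node t₁ (del p).2.1, .right (del p).2.2⟩)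

lemma ins_leaves (b : Bool) : ∀ {t : BTree} (p : BPath t),
    (ins b p).1.leaves = t.leaves + 1 := by
  intro t p
  induction p with
  | root t => cases b <;> simp [ins, BTree.leaves] <;> omega
  | left p ih => simp [ins, BTree.leaves, ih]; omega
  | right p ih => simp [ins, BTree.leaves, ih]; omega

lemma ins_target (b : Bool) : ∀ {t : BTree} (p : BPath t),
    (ins b p).2.target = .leaf := by
  intro t p
  induction p with
  | root t => cases b <;> simp [ins, BPath.target]
  | left p ih => simpa [ins, BPath.target] using ih
  | right p ih => simpa [ins, BPath.target] using ih

lemma ins_isNode (b : Bool) {t : BTree} (p : BPath t) :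
    ∃ a, ∃ c, ∃ q : BPath (BTree.node a c), ins b p = ⟨BTree.node a c, q⟩ := by
  cases p <;> cases b <;> exact ⟨_, _, _, rfl⟩

lemma del_ins (b : Bool) {t : BTree} (p : BPath t) :
    del (ins b p).2 = (b, ⟨t, p⟩) := by
  induction p with
  | root t => cases b <;> rfl
  | left p ih =>
      obtain ⟨a, c, q, h⟩ := ins_isNode b p
      rw [h] at ih
      simp only [ins]
      rw [h]
      simp only [del]
      simp only at ih ⊢
      rw [ih]
  | right p ih =>
      obtain ⟨a, c, q, h⟩ := ins_isNode b p
      rw [h] at ih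
      simp only [ins]
      rw [h]
      simp only [del]
      simp only at ih ⊢
      rw [ih]

lemma ins_del : ∀ {t : BTree} (p : BPath t), t ≠ .leaf → p.target = .leaf →
    ins (del p).1 (del p).2.2 = (⟨t, p⟩ : Σ t, BPath t) := by
  intro t p
  induction p with
  | root t => intro ht hp; exact absurd hp ht
  | @left t₁ t₂ p ih =>
      intro _ hp
      cases t₁ with
      | leaf => cases p; rfl
      | node a c =>
          have hp' : p.target = .leaf := hp
          have h := ih (by simp) hp'
          simp only [del, ins]
          rw [h]
  | @right t₁ t₂ p ih =>
      intro _ hp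
      cases t₂ with
      | leaf => cases p; rfl
      | node a c =>
          have hp' : p.target = .leaf := hp
          have h := ih (by simp) hp'
          simp only [del, ins]
          rw [h]

/-- Rémy's bijection: for every `n ≥ 1` there is a bijection between
`{1,2} × (pointed binary plane trees with n leaves)` and leaf-pointed binary
plane trees with `n+1` leaves. -/
theorem remy_bijection (n : ℕ) (hn : 1 ≤ n) :
    Nonempty ((Fin 2 × {x : Σ t : BTree, BPath t // x.1.leaves = n}) ≃
      {x : Σ t : BTree, BPath t // x.1.leaves = n + 1 ∧ x.2.target = .leaf}) := by
  have hne : ∀ {t : BTree}, t.leaves = n + 1 → t ≠ .leaf := by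
    intro t ht h
    subst h
    simp [BTree.leaves] at ht
    omega
  refine ⟨{
    toFun := fun x => ⟨ins (x.1 == 0) x.2.1.2,
      by rw [ins_leaves, x.2.2], ins_target _ _⟩
    invFun := fun x =>
      ((if (del x.1.2).1 then 0 else 1 : Fin 2),
        ⟨(del x.1.2).2, by
          have h := ins_del x.1.2 (hne x.2.1) x.2.2
          have h3 := ins_leaves (del x.1.2).1 (del x.1.2).2.2
          simp only [h] at h3
          have h2 := x.2.1
          omega⟩)
    left_inv := ?_
    right_inv := ?_ }⟩
  · rintro ⟨i, ⟨⟨t, p⟩, h⟩⟩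
    have hd := del_ins (i == 0) p
    refine Prod.ext ?_ (Subtype.ext ?_)
    · show (if (del (ins (i == 0) p).2).1 then 0 else 1 : Fin 2) = i
      rw [hd]
      fin_cases i <;> rfl
    · show ((del (ins (i == 0) p).2).2 : Σ t, BPath t) = ⟨t, p⟩
      rw [hd]
  · rintro ⟨⟨t, p⟩, h1, h2⟩
    have hb : ((if (del p).1 then 0 else 1 : Fin 2) == 0) = (del p).1 := by
      cases (del p).1 <;> rfl
    apply Subtype.ext
    simp only [hb]
    exact ins_del p (hne h1) h2
end
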